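/- arXiv:1302.2007 — 2 statements merged into one kernel-verified Lean document; each statement's English description precedes it below -/
import Mathlib

section
/- Let u, v be hermitian functionals related by a rational modification u·L = v·M with L, M nonzero Laurent polynomials. The correspondence L ↔ M is uniquely determined (i.e., u·L = v·M and u·L = v·M₁ imply M = M₁, and symmetrically) if and only if u ∉ Δ and v ∉ Δ. -/
open LaurentPolynomial Complex Polynomial

noncomputable section

abbrev LP := LaurentPolynomial ℂ
abbrev Func := LP →ₗ[ℂ] ℂ

/-- The coefficients of a Laurent polynomial, as a finitely supported function on `ℤ`. -/
def coeF (L : LP) : ℤ →₀ ℂ := L.coeff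

/-- The modified functional `u·L`, defined by `(u·L)[f] = u[L·f]`. -/
def smulF (u : Func) (L : LP) : Func := u ∘ₗ LinearMap.mulLeft ℂ L

/-- The moments `μ_n = u[zⁿ]`. -/
def moment (u : Func) (n : ℤ) : ℂ := u (T n)

/-- A functional is hermitian if `μ_{-n} = conj μ_n`. -/
def IsHermitian (u : Func) : Prop := ∀ n : ℤ, moment u (-n) = (starRingEnd ℂ) (moment u n)

/-- The Carathéodory formal series `F(z) = μ₀ + 2 Σ_{n≥1} μ_{-n} zⁿ`, as coefficients. -/
def CS (u : Func) : ℤ → ℂ := fun n => if n = 0 then moment u 0 else if 0 < n then 2 * moment u (-n) else 0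

/-- The Laurent formal series `L[u](z) = Σ_{n∈ℤ} μ_{-n} zⁿ`, as coefficients. -/
def LS (u : Func) : ℤ → ℂ := fun n => moment u (-n)

/-- `H_*(z) = conj (H (1/conj z))`, coefficient-wise. -/
def starS (H : ℤ → ℂ) : ℤ → ℂ := fun n => (starRingEnd ℂ) (H (-n))

/-- Product of a formal doubly-infinite series with a Laurent polynomial. -/
def mulS (H : ℤ → ℂ) (L : LP) : ℤ → ℂ := fun n => (coeF L).sum fun k c => c * H (n - k)

/-- The `*` operation on Laurent polynomials: `L_*(z) = conj (L (1/conj z))`. -/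
def starLP (L : LP) : LP :=
  AddMonoidAlgebra.ofCoeff (Finsupp.equivMapDomain (Equiv.neg ℤ)
    (Finsupp.mapRange (starRingEnd ℂ) (map_zero _) (coeF L)) : ℤ →₀ ℂ)

/-- A Laurent polynomial as a formal series. -/
def polyS (N : LP) : ℤ → ℂ := fun n => coeF N n

/-- The Lebesgue functional `leb[zⁿ] = δ_{n,0}`. -/
def lebF : Func := (Finsupp.lapply (0 : ℤ) : (ℤ →₀ ℂ) →ₗ[ℂ] ℂ) ∘ₗ (AddMonoidAlgebra.coeffLinearEquiv ℂ : LP ≃ₗ[ℂ] (ℤ →₀ ℂ)).toLinearMap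

/-- The Dirac delta at `z = 1`: evaluation at `1`. -/
def delta1 : Func := (Finsupp.lsum ℂ (fun _ : ℤ => (LinearMap.id : ℂ →ₗ[ℂ] ℂ)) : (ℤ →₀ ℂ) →ₗ[ℂ] ℂ) ∘ₗ (AddMonoidAlgebra.coeffLinearEquiv ℂ : LP ≃ₗ[ℂ] (ℤ →₀ ℂ)).toLinearMap

/-- `P* (z) = z^q conj(P(1/conj z))` with `q` given: conjugate coefficients and reflect at `q`. -/
def starDeg (q : ℕ) (P : Polynomial ℂ) : Polynomial ℂ := Polynomial.reflect q (P.map (starRingEnd ℂ))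

/-- The class `Δ` of hermitian functionals annihilated by a nonzero Laurent polynomial. -/
def InDelta (u : Func) : Prop := IsHermitian u ∧ ∃ N : LP, N ≠ 0 ∧ smulF u N = 0


lemma smulF_sub (u : Func) (A B : LP) : smulF u (A - B) = smulF u A - smulF u B := by
  apply LinearMap.ext; intro f
  simp [smulF, LinearMap.mulLeft_apply, sub_mul, map_sub]

lemma smulF_add (u : Func) (A B : LP) : smulF u (A + B) = smulF u A + smulF u B := by
  apply LinearMap.ext; intro f
  simp [smulF, LinearMap.mulLeft_apply, add_mul, map_add]

lemma smulF_smul (u : Func) (c : ℂ) (A : LP) : smulF u (c • A) = c • smulF u A := by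
  apply LinearMap.ext; intro f
  simp [smulF, LinearMap.mulLeft_apply, smul_mul_assoc, map_smul]

/-- for hermitian `u, v` related by a rational modification, the
correspondence `L ↔ M` is uniquely determined iff `u ∉ Δ` and `v ∉ Δ`. -/
theorem stmt7 (u v : Func) (hu : IsHermitian u) (hv : IsHermitian v)
    (hRM : ∃ L M : LP, L ≠ 0 ∧ M ≠ 0 ∧ smulF u L = smulF v M) :
    ((∀ L M M₁ : LP, L ≠ 0 → M ≠ 0 → M₁ ≠ 0 →
        smulF u L = smulF v M → smulF u L = smulF v M₁ → M = M₁) ∧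
     (∀ M L L₁ : LP, M ≠ 0 → L ≠ 0 → L₁ ≠ 0 →
        smulF u L = smulF v M → smulF u L₁ = smulF v M → L = L₁)) ↔
    (¬ InDelta u ∧ ¬ InDelta v) := by
  obtain ⟨L0, M0, hL0, hM0, hEq0⟩ := hRM
  constructor
  · rintro ⟨h1, h2⟩
    constructor
    · rintro ⟨_, N, hN, hNann⟩
      -- break uniqueness of L using annihilator of u
      by_cases hc : L0 + N = 0
      · have hne : L0 + (2:ℂ) • N ≠ 0 := by
          intro h
          apply hN
          have : ((2:ℂ) - 1) • N = 0 := by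
            have := sub_eq_zero.mpr (h.trans hc.symm)
            calc ((2:ℂ) - 1) • N = (L0 + (2:ℂ) • N) - (L0 + N) := by
                  rw [sub_smul, one_smul]; ring
              _ = 0 := this
          rcases smul_eq_zero.mp this with h | h
          · norm_num at h
          · exact h
        have hEq1 : smulF u (L0 + (2:ℂ) • N) = smulF v M0 := by
          rw [smulF_add, smulF_smul, hNann, smul_zero, add_zero, hEq0]
        have := h2 M0 L0 (L0 + (2:ℂ) • N) hM0 hL0 hne hEq0 hEq1
        apply hN
        have h2N : (2:ℂ) • N = 0 := by
          have := this
          have : L0 + (2:ℂ) • N = L0 + 0 := by rw [add_zero]; exact this.symm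
          exact add_left_cancel this
        simpa using h2N
      · have hEq1 : smulF u (L0 + N) = smulF v M0 := by
          rw [smulF_add, hNann, add_zero, hEq0]
        have := h2 M0 L0 (L0 + N) hM0 hL0 hc hEq0 hEq1
        apply hN
        have : L0 + N = L0 + 0 := by rw [add_zero]; exact this.symm
        exact add_left_cancel this
    · rintro ⟨_, N, hN, hNann⟩
      by_cases hc : M0 + N = 0
      · have hne : M0 + (2:ℂ) • N ≠ 0 := by
          intro h
          apply hN
          have : ((2:ℂ) - 1) • N = 0 := by
            calc ((2:ℂ) - 1) • N = (M0 + (2:ℂ) • N) - (M0 + N) := by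
                  rw [sub_smul, one_smul]; ring
              _ = 0 := sub_eq_zero.mpr (h.trans hc.symm)
          rcases smul_eq_zero.mp this with h | h
          · norm_num at h
          · exact h
        have hEq1 : smulF u L0 = smulF v (M0 + (2:ℂ) • N) := by
          rw [smulF_add, smulF_smul, hNann, smul_zero, add_zero, hEq0]
        have := h1 L0 M0 (M0 + (2:ℂ) • N) hL0 hM0 hne hEq0 hEq1
        apply hN
        have h2N : (2:ℂ) • N = 0 := by
          have : M0 + (2:ℂ) • N = M0 + 0 := by rw [add_zero]; exact this.symm
          exact add_left_cancel this
        simpa using h2N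
      · have hEq1 : smulF u L0 = smulF v (M0 + N) := by
          rw [smulF_add, hNann, add_zero, hEq0]
        have := h1 L0 M0 (M0 + N) hL0 hM0 hc hEq0 hEq1
        apply hN
        have : M0 + N = M0 + 0 := by rw [add_zero]; exact this.symm
        exact add_left_cancel this
  · rintro ⟨hdu, hdv⟩
    have hvann : ∀ N : LP, smulF v N = 0 → N = 0 := by
      intro N hNann
      by_contra hN
      exact hdv ⟨hv, N, hN, hNann⟩
    have huann : ∀ N : LP, smulF u N = 0 → N = 0 := by
      intro N hNann
      by_contra hN
      exact hdu ⟨hu, N, hN, hNann⟩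
    constructor
    · intro L M M₁ _ _ _ hA hB
      have : smulF v (M - M₁) = 0 := by
        rw [smulF_sub, ← hA, ← hB, sub_self]
      exact sub_eq_zero.mp (hvann _ this)
    · intro M L L₁ _ _ _ hA hB
      have : smulF u (L - L₁) = 0 := by
        rw [smulF_sub, hA, hB, sub_self]
      exact sub_eq_zero.mp (huann _ this)
end
end

section
/- A hermitian functional u with Carathéodory series F lies in the class Rat (∃ L ∈ Λ₀, N ∈ Λ with F·L = N) if and only if there exists (L, M) ∈ Λ₀ × Λ with u·L = leb·M, where leb is the functional of the normalized Lebesgue measure on the unit circle (leb[zⁿ] = δ_{n,0}). -/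
open LaurentPolynomial Complex Polynomial

noncomputable section

def sg (b : ℤ) (c : ℂ) : LP := AddMonoidAlgebra.single b c

lemma LP_ext {A B : LP} (h : ∀ n, coeF A n = coeF B n) : A = B := AddMonoidAlgebra.ext (Finsupp.ext h)

lemma coeF_zero : coeF (0 : LP) = 0 := rfl

lemma coeF_add (A B : LP) : coeF (A + B) = coeF A + coeF B := rfl

lemma coeF_single (b : ℤ) (c : ℂ) : coeF (sg b c) = Finsupp.single b c := rfl

lemma mulS_zero (H : ℤ → ℂ) : mulS H 0 = 0 := by
  funext n; simp [mulS, coeF_zero]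

lemma mulS_add (H : ℤ → ℂ) (A B : LP) (n : ℤ) :
    mulS H (A + B) n = mulS H A n + mulS H B n := by
  simp only [mulS, coeF_add]
  rw [Finsupp.sum_add_index] <;> simp [add_mul]

lemma mulS_single (H : ℤ → ℂ) (b : ℤ) (c : ℂ) (n : ℤ) :
    mulS H (sg b c) n = c * H (n - b) := by
  rw [mulS, coeF_single, Finsupp.sum_single_index]
  simp

lemma starLP_apply (L : LP) (n : ℤ) : coeF (starLP L) n = (starRingEnd ℂ) (coeF L (-n)) := rfl

lemma single_coe (b n : ℤ) (c : ℂ) :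
    coeF (sg b c) n = if b = n then c else 0 := Finsupp.single_apply

lemma starLP_single (b : ℤ) (c : ℂ) :
    starLP (sg b c) = sg (-b) ((starRingEnd ℂ) c) := by
  apply LP_ext; intro n
  rw [starLP_apply, single_coe, single_coe]
  by_cases h : n = -b
  · simp [h]
  · rw [if_neg (by omega), if_neg (by omega), map_zero]

lemma starLP_zero : starLP 0 = 0 := by apply LP_ext; intro n; rw [starLP_apply]; simp [coeF_zero]

lemma starLP_add (A B : LP) : starLP (A + B) = starLP A + starLP B := by
  apply LP_ext; intro n
  rw [coeF_add, starLP_apply, coeF_add]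
  simp [starLP_apply]

lemma starLP_starLP (L : LP) : starLP (starLP L) = L := by
  apply LP_ext; intro n
  rw [starLP_apply, starLP_apply, neg_neg]
  simp

lemma starLP_ne_zero {L : LP} (h : L ≠ 0) : starLP L ≠ 0 := by
  intro h0
  apply h
  apply LP_ext; intro n
  have := congrArg (fun X => coeF X (-n)) h0
  simp only [starLP_apply, neg_neg] at this
  simpa [coeF_zero] using congrArg (starRingEnd ℂ) this

lemma coeF_mul_single (A : LP) (b : ℤ) (c : ℂ) (n : ℤ) :
    coeF (A * sg b c) n = coeF A (n - b) * c :=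
  AddMonoidAlgebra.coeff_mul_single_apply A c b n

lemma mulS_mul_single (H : ℤ → ℂ) (A : LP) (b : ℤ) (c : ℂ) (n : ℤ) :
    mulS H (A * sg b c) n = c * mulS H A (n - b) := by
  induction A using AddMonoidAlgebra.induction_linear with
  | zero => rw [zero_mul]; simp [mulS_zero]
  | add f g hf hg => rw [add_mul, mulS_add, mulS_add, hf, hg, mul_add]
  | single a r =>
      show mulS H (sg a r * sg b c) n = c * mulS H (sg a r) (n - b)
      rw [show (sg a r) * sg b c = sg (a + b) (r * c)
        from AddMonoidAlgebra.single_mul_single .., mulS_single, mulS_single]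
      rw [show n - (a + b) = n - b - a by ring]
      ring

lemma mulS_mul (H : ℤ → ℂ) (A B : LP) (n : ℤ) :
    mulS H (A * B) n = mulS (mulS H A) B n := by
  induction B using AddMonoidAlgebra.induction_linear with
  | zero => rw [mul_zero]; simp [mulS_zero]
  | add f g hf hg => rw [mul_add, mulS_add, mulS_add, hf, hg]
  | single b c =>
      show mulS H (A * sg b c) n = mulS (mulS H A) (sg b c) n
      rw [mulS_mul_single, mulS_single]

lemma mulS_polyS (A B : LP) : mulS (polyS A) B = polyS (A * B) := by
  funext n
  induction B using AddMonoidAlgebra.induction_linear with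
  | zero => rw [mul_zero]; simp [mulS_zero, polyS, coeF_zero]
  | add f g hf hg => rw [mul_add, mulS_add, hf, hg]; simp [polyS, coeF_add]
  | single b c =>
      show mulS (polyS A) (sg b c) n = coeF (A * sg b c) n
      rw [mulS_single, coeF_mul_single, polyS]
      exact mul_comm _ _

lemma starLP_mul (A B : LP) : starLP (A * B) = starLP A * starLP B := by
  induction B using AddMonoidAlgebra.induction_linear with
  | zero => rw [mul_zero, starLP_zero, mul_zero]
  | add f g hf hg => rw [mul_add, starLP_add, hf, hg, starLP_add f g, mul_add]
  | single b c =>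
      show starLP (A * sg b c) = starLP A * starLP (sg b c)
      rw [starLP_single]
      apply LP_ext; intro n
      rw [starLP_apply, coeF_mul_single, coeF_mul_single, map_mul, starLP_apply,
        show -n - b = -(n - -b) by ring]

lemma mulS_starS (H : ℤ → ℂ) (A : LP) (n : ℤ) :
    mulS (starS H) (starLP A) n = (starRingEnd ℂ) (mulS H A (-n)) := by
  induction A using AddMonoidAlgebra.induction_linear with
  | zero => rw [starLP_zero]; simp [mulS_zero]
  | add f g hf hg => rw [starLP_add, mulS_add, mulS_add, hf, hg, map_add]
  | single b c =>
      show mulS (starS H) (starLP (sg b c)) n = (starRingEnd ℂ) (mulS H (sg b c) (-n))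
      rw [starLP_single, mulS_single, mulS_single, map_mul, starS,
        show -(n - -b) = -n - b by ring]

lemma mulS_addS (H₁ H₂ : ℤ → ℂ) (A : LP) (n : ℤ) :
    mulS (fun m => H₁ m + H₂ m) A n = mulS H₁ A n + mulS H₂ A n := by
  rw [mulS, mulS, mulS, ← Finsupp.sum_add]
  exact Finsupp.sum_congr fun k _ => by ring

lemma moment_eq (u : Func) (m : ℤ) : moment u m = u (sg m 1) := rfl

lemma smulF_apply_single (u : Func) (L : LP) (n : ℤ) :
    smulF u L (sg n 1) = (coeF L).sum fun k c => c * moment u (k + n) := by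
  show u (L * sg n 1) = _
  induction L using AddMonoidAlgebra.induction_linear with
  | zero => rw [zero_mul, map_zero, coeF_zero, Finsupp.sum_zero_index]
  | add f g hf hg =>
      rw [add_mul, map_add, hf, hg, coeF_add, Finsupp.sum_add_index]
      · intro k _; rw [zero_mul]
      · intro k _ c₁ c₂; rw [add_mul]
  | single k c =>
      show u (sg k c * sg n 1) = (coeF (sg k c)).sum fun k c => c * moment u (k + n)
      rw [show sg k c * sg n 1 = sg (k + n) (c * 1) from AddMonoidAlgebra.single_mul_single ..,
        mul_one, show (sg (k+n) c : LP) = c • sg (k+n) 1 by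
          rw [show (c • sg (k+n) 1 : LP) = AddMonoidAlgebra.single (k+n) (c*1) from AddMonoidAlgebra.smul_single' c (k+n) 1, mul_one]; rfl,
        map_smul, smul_eq_mul, coeF_single, Finsupp.sum_single_index, moment_eq]
      rw [zero_mul]

lemma lebF_smulF_apply_single (M : LP) (n : ℤ) :
    smulF lebF M (sg n 1) = coeF M (-n) := by
  show coeF (M * sg n 1) 0 = coeF M (-n)
  rw [coeF_mul_single, mul_one, zero_sub]

lemma smulF_iff (u : Func) (L M : LP) :
    smulF u L = smulF lebF M ↔ ∀ n, mulS (LS u) L n = polyS M n := by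
  constructor
  · intro h n
    have := congrArg (fun φ : Func => φ (sg (-n) 1)) h
    rw [smulF_apply_single, lebF_smulF_apply_single, neg_neg] at this
    rw [mulS, polyS, ← this]
    refine Finsupp.sum_congr fun k _ => ?_
    simp only [LS]
    rw [show -(n-k) = k + -n by ring]
  · intro h
    refine AddMonoidAlgebra.lhom_ext' fun a => LinearMap.ext fun b => ?_
    show smulF u L (AddMonoidAlgebra.single a b) = smulF lebF M (AddMonoidAlgebra.single a b)
    have hb : (AddMonoidAlgebra.single a b : LP) = b • sg a 1 := by
      rw [show (b • sg a 1 : LP) = AddMonoidAlgebra.single a (b*1) from AddMonoidAlgebra.smul_single' b a 1, mul_one]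
    rw [hb, map_smul, map_smul]
    congr 1
    refine (smulF_apply_single u L a).trans (Eq.trans ?_ (lebF_smulF_apply_single M a).symm)
    have := h (-a)
    rw [mulS, polyS] at this
    rw [← this]
    refine Finsupp.sum_congr fun k _ => ?_
    simp only [LS]
    rw [show -(-a-k) = k + a by ring]

lemma coeF_smul (c : ℂ) (A : LP) (n : ℤ) : coeF (c • A) n = c * coeF A n := rfl

lemma mulS_constMul (c : ℂ) (H : ℤ → ℂ) (A : LP) (n : ℤ) :
    mulS (fun m => c * H m) A n = c * mulS H A n := by
  rw [mulS, mulS, Finsupp.mul_sum]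
  exact Finsupp.sum_congr fun k _ => by ring

lemma herm_CS {u : Func} (hu : IsHermitian u) (n : ℤ) :
    CS u n + starS (CS u) n = 2 * LS u n := by
  simp only [CS, starS, LS]
  rcases lt_trichotomy n 0 with h | h | h
  · rw [if_neg (by omega), if_neg (by omega), if_neg (by omega), if_pos (by omega), zero_add,
      map_mul, neg_neg, ← hu n, Complex.conj_ofNat]
  · subst h
    have h0 := hu 0
    rw [neg_zero] at h0
    simp only [neg_zero, reduceIte]
    rw [← h0]
    ring
  · rw [if_neg (by omega), if_pos h, if_neg (by omega), if_neg (by omega), map_zero, add_zero]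

lemma starLP_mul_starLP (L : LP) : starLP (L * starLP L) = L * starLP L := by
  rw [starLP_mul, starLP_starLP, mul_comm]

/-- a hermitian `u` lies in `Rat` (its Carathéodory series satisfies
`F·L = N` for some `L ∈ Λ₀`, `N ∈ Λ`) iff `u·L = leb·M` for some `(L,M) ∈ Λ₀ × Λ`. -/
theorem stmt12 (u : Func) (hu : IsHermitian u) :
    (∃ (L N : LP), L ≠ 0 ∧ mulS (CS u) L = polyS N) ↔
    (∃ (L M : LP), L ≠ 0 ∧ smulF u L = smulF lebF M) := by
  constructor
  · rintro ⟨L, N, hL, hF⟩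
    set Ls := starLP L with hLs
    set L' := L * Ls with hL'def
    have hL' : L' ≠ 0 := mul_ne_zero hL (starLP_ne_zero hL)
    have hA : ∀ n, mulS (CS u) L' n = polyS (N * Ls) n := by
      intro n
      rw [hL'def, mulS_mul, hF, mulS_polyS]
    have hstar : starLP L' = L' := starLP_mul_starLP L
    have hB : ∀ n, mulS (starS (CS u)) L' n = coeF (starLP (N * Ls)) n := by
      intro n
      rw [← hstar, mulS_starS, hA, starLP_apply, polyS]
    refine ⟨L', (2⁻¹ : ℂ) • (N * Ls + starLP (N * Ls)), hL', ?_⟩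
    rw [smulF_iff]
    intro n
    have h2 : 2 * mulS (LS u) L' n = mulS (fun m => CS u m + starS (CS u) m) L' n := by
      rw [← mulS_constMul 2 (LS u) L' n]
      congr 1
      funext m
      rw [herm_CS hu]
    rw [mulS_addS, hA, hB, polyS] at h2
    have : mulS (LS u) L' n = 2⁻¹ * (coeF (N * Ls) n + coeF (starLP (N * Ls)) n) := by
      rw [← h2]; ring
    rw [this, polyS, coeF_smul, coeF_add]
    rfl
  · rintro ⟨L, M, hL, hs⟩
    rw [smulF_iff] at hs
    set Ls := starLP L with hLs
    set L' := L * Ls with hL'def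
    have hL' : L' ≠ 0 := mul_ne_zero hL (starLP_ne_zero hL)
    have hstar : starLP L' = L' := starLP_mul_starLP L
    have hLS' : ∀ n, mulS (LS u) L' n = coeF (M * Ls) n := by
      intro n
      rw [hL'def, mulS_mul, show mulS (LS u) L = polyS M from funext hs, mulS_polyS, polyS]
    set G : ℤ → ℂ := mulS (CS u) L' with hG
    set Q : LP := (2 : ℂ) • (M * Ls) with hQ
    have keyQ : ∀ n, G n + (starRingEnd ℂ) (G (-n)) = coeF Q n := by
      intro n
      have hB : (starRingEnd ℂ) (G (-n)) = mulS (starS (CS u)) L' n := by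
        rw [hG, ← mulS_starS, hstar]
      rw [hB, hG, ← mulS_addS, hQ, coeF_smul, ← hLS' n]
      have := mulS_constMul 2 (LS u) L' n
      rw [← this]
      congr 1
      funext m
      rw [herm_CS hu]
    have hne : (coeF L').support.Nonempty := by
      rw [Finsupp.support_nonempty_iff]
      exact fun h => hL' (AddMonoidAlgebra.coeff_eq_zero.mp h)
    set b : ℤ := (coeF L').support.min' hne with hb
    have vanish : ∀ n, n < b → G n = 0 := by
      intro n hn
      rw [hG, mulS]
      apply Finset.sum_eq_zero
      intro k hk
      have hbk : b ≤ k := Finset.min'_le _ _ hk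
      have : CS u (n - k) = 0 := by
        rw [CS, if_neg (by omega), if_neg (by omega)]
      show (coeF L') k * CS u (n - k) = 0
      rw [this, mul_zero]
    classical
    set S : Finset ℤ := (coeF Q).support ∪ Finset.Icc b (-b) with hS
    have hGS : ∀ n, G n ≠ 0 → n ∈ S := by
      intro n hGn
      by_contra hnS
      apply hGn
      rw [hS, Finset.mem_union, Finset.mem_Icc] at hnS
      push_neg at hnS
      obtain ⟨hQ0, hIcc⟩ := hnS
      rw [Finsupp.notMem_support_iff] at hQ0
      by_cases hnb : n < b
      · exact vanish n hnb
      · have hnb' : -n < b := by omega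
        have := keyQ n
        rw [hQ0, vanish (-n) hnb', map_zero, add_zero] at this
        exact this
    refine ⟨L', AddMonoidAlgebra.ofCoeff (Finsupp.onFinset S G hGS), hL', ?_⟩
    funext n
    rw [← hG, polyS]
    exact (Finsupp.onFinset_apply (hf := hGS)).symm
end
end
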